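/- Let N ≥ 2 be an integer and let p, μ, m be real numbers with 1 < p < N, 0 ≤ μ < μ̄ := ((N−p)/p)^p and m > 0. Let f : ℝ → ℝ be continuous and satisfy (F). Let u : (0,∞) → ℝ be a radial profile solution of the equation (hypothesis (S)) that also satisfies (W). Define w(r) = −r^{p−1}|u'(r)|^{p−2}u'(r)/u(r)^{p−1} for r > 0. Then w(r) → γ₁^{p−1} as r → 0+, where γ₁ is the unique zero of Γ_μ in [0, (N−p)/p). -/

import Mathlib

open Filter Topology MeasureTheory Set

lemma abs_rpow_tendsto_zero {e : ℝ} (he : 0 < e) :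
    Tendsto (fun x : ℝ => |x| ^ e) (𝓝 0) (𝓝 0) := by
  have h : ContinuousAt (fun x : ℝ => |x| ^ e) 0 := by
    have h1 : ContinuousAt (fun z : ℝ => z ^ e) (|0| : ℝ) :=
      Real.continuousAt_rpow_const _ _ (Or.inr he.le)
    exact h1.comp continuous_abs.continuousAt
  have h0 : (fun x : ℝ => |x| ^ e) 0 = 0 := by
    simp [Real.zero_rpow (ne_of_gt he)]
  simpa [Real.zero_rpow (ne_of_gt he)] using h.tendsto

lemma abs_rpow_hasDerivAt {c : ℝ} (hc : 1 < c) (y : ℝ) :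
    HasDerivAt (fun x : ℝ => |x| ^ c) (c * |y| ^ (c - 2) * y) y := by
  rcases lt_trichotomy y 0 with hy | hy | hy
  · have h1 : HasDerivAt (fun x : ℝ => (-x) ^ c) (c * (-y) ^ (c - 1) * (-1)) y := by
      have := (hasDerivAt_neg y).rpow_const (p := c) (Or.inl (by linarith))
      simpa using this
    have h2 : (fun x : ℝ => |x| ^ c) =ᶠ[𝓝 y] fun x => (-x) ^ c := by
      filter_upwards [Iio_mem_nhds hy] with x hx
      rw [abs_of_neg hx]
    refine (h1.congr_of_eventuallyEq h2).congr_deriv ?_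
    have hy' : (-y) ≠ 0 := by linarith
    have : (-y : ℝ) ^ (c - 1) = (-y) ^ (c - 2) * (-y) := by
      rw [← Real.rpow_add_one hy']; ring_nf
    rw [abs_of_neg hy, this]; ring
  · subst hy
    have : HasDerivAt (fun x : ℝ => |x| ^ c) 0 0 := by
      rw [hasDerivAt_iff_tendsto_slope]
      apply squeeze_zero_norm' (a := fun x : ℝ => |x| ^ (c - 1))
      · filter_upwards [self_mem_nhdsWithin] with x (hx : x ≠ 0)
        have hax : |x| ≠ 0 := abs_ne_zero.mpr hx
        have hkey : |x| ^ c = |x| ^ (c-1) * |x| := by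
          rw [← Real.rpow_add_one hax]; ring_nf
        have : slope (fun x : ℝ => |x| ^ c) 0 x = |x| ^ c / x := by
          simp [slope_def_field, Real.zero_rpow (by positivity : c ≠ 0)]
        rw [Real.norm_eq_abs, this, abs_div, abs_of_nonneg (Real.rpow_nonneg (abs_nonneg x) c),
          hkey, mul_div_assoc, div_self hax, mul_one]
      · exact (abs_rpow_tendsto_zero (by linarith)).mono_left nhdsWithin_le_nhds
    simpa using this
  · have h1 : HasDerivAt (fun x : ℝ => x ^ c) (c * y ^ (c - 1)) y :=
      Real.hasDerivAt_rpow_const (Or.inl (ne_of_gt hy))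
    have h2 : (fun x : ℝ => |x| ^ c) =ᶠ[𝓝 y] fun x => x ^ c := by
      filter_upwards [Ioi_mem_nhds hy] with x hx
      rw [abs_of_pos hx]
    refine (h1.congr_of_eventuallyEq h2).congr_deriv ?_
    have : (y : ℝ) ^ (c - 1) = y ^ (c - 2) * y := by
      rw [← Real.rpow_add_one (ne_of_gt hy)]; ring_nf
    rw [abs_of_pos hy, this]; ring

noncomputable def PHI (p NN μ : ℝ) (x : ℝ) : ℝ :=
  (p - 1) * |x| ^ (p / (p - 1)) - (NN - p) * x + μ

section PHIlem
variable {p NN μ : ℝ} (hp1 : 1 < p) (hpN : p < NN)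

include hp1 in
lemma PHI_hasDerivAt (x : ℝ) :
    HasDerivAt (PHI p NN μ) (p * |x| ^ (p / (p - 1) - 2) * x - (NN - p)) x := by
  have hc : 1 < p / (p - 1) := by
    rw [lt_div_iff₀ (by linarith)]; linarith
  have h1 := ((abs_rpow_hasDerivAt hc x).const_mul (p - 1)).sub
    ((hasDerivAt_id x).const_mul (NN - p))
  have h2 := h1.add_const μ
  have hpp : (p - 1) * (p / (p - 1)) = p := by
    rw [mul_comm, div_mul_cancel₀ _ (by linarith : p - 1 ≠ 0)]
  have heq : (p - 1) * (p / (p - 1) * |x| ^ (p / (p - 1) - 2) * x) - (NN - p) * 1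
      = p * |x| ^ (p / (p - 1) - 2) * x - (NN - p) := by
    rw [show (p - 1) * (p / (p - 1) * |x| ^ (p / (p - 1) - 2) * x)
        = ((p - 1) * (p / (p - 1))) * |x| ^ (p / (p - 1) - 2) * x by ring, hpp]
    ring
  simp only [id_eq, smul_eq_mul] at h2
  rw [heq] at h2
  exact h2.congr_of_eventuallyEq (by filter_upwards with y; simp [PHI])

include hp1 hpN in
lemma PHI_deriv_neg {x : ℝ} (hx : x < ((NN - p)/p) ^ (p-1)) :
    p * |x| ^ (p / (p - 1) - 2) * x - (NN - p) < 0 := by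
  have hNp : (0:ℝ) < NN - p := by linarith
  have hp0 : (0:ℝ) < p := by linarith
  have hp1' : (0:ℝ) < p - 1 := by linarith
  rcases le_or_gt x 0 with h | h
  · have : p * |x| ^ (p / (p - 1) - 2) * x ≤ 0 := by
      apply mul_nonpos_of_nonneg_of_nonpos _ h
      positivity
    linarith
  · have hxx : |x| ^ (p / (p - 1) - 2) * x = x ^ (1 / (p-1)) := by
      rw [abs_of_pos h, ← Real.rpow_add_one (ne_of_gt h)]
      congr 1
      field_simp
      ring
    have hmono : x ^ (1 / (p-1)) < (((NN - p)/p) ^ (p-1)) ^ (1/(p-1)) :=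
      Real.rpow_lt_rpow h.le hx (by positivity)
    have hcollapse : (((NN - p)/p) ^ (p-1)) ^ (1/(p-1)) = (NN - p)/p := by
      rw [← Real.rpow_mul (by positivity), mul_one_div, div_self (ne_of_gt hp1'),
        Real.rpow_one]
    rw [mul_assoc, hxx]
    rw [hcollapse] at hmono
    have h2 : p * x ^ (1/(p-1)) < p * ((NN - p)/p) := mul_lt_mul_of_pos_left hmono hp0
    have h3 : p * ((NN-p)/p) = NN - p := by field_simp
    linarith

include hp1 hpN in
lemma PHI_deriv_pos {x : ℝ} (hx : ((NN - p)/p) ^ (p-1) < x) :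
    0 < p * |x| ^ (p / (p - 1) - 2) * x - (NN - p) := by
  have hNp : (0:ℝ) < NN - p := by linarith
  have hp0 : (0:ℝ) < p := by linarith
  have hp1' : (0:ℝ) < p - 1 := by linarith
  have hws : (0:ℝ) < ((NN - p)/p) ^ (p-1) := by positivity
  have h : 0 < x := hws.trans hx
  have hxx : |x| ^ (p / (p - 1) - 2) * x = x ^ (1 / (p-1)) := by
    rw [abs_of_pos h, ← Real.rpow_add_one (ne_of_gt h)]
    congr 1
    field_simp
    ring
  have hmono : (((NN - p)/p) ^ (p-1)) ^ (1/(p-1)) < x ^ (1 / (p-1)) :=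
    Real.rpow_lt_rpow hws.le hx (by positivity)
  have hcollapse : (((NN - p)/p) ^ (p-1)) ^ (1/(p-1)) = (NN - p)/p := by
    rw [← Real.rpow_mul (by positivity), mul_one_div, div_self (ne_of_gt hp1'),
      Real.rpow_one]
  rw [mul_assoc, hxx]
  rw [hcollapse] at hmono
  have h2 : p * ((NN-p)/p) < p * x ^ (1/(p-1)) := mul_lt_mul_of_pos_left hmono hp0
  have h3 : p * ((NN-p)/p) = NN - p := by field_simp
  linarith

include hp1 hpN in
lemma PHI_strictAntiOn : StrictAntiOn (PHI p NN μ) (Iic (((NN - p)/p) ^ (p-1))) := by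
  apply strictAntiOn_of_deriv_neg (convex_Iic _)
  · exact fun x _ => ((PHI_hasDerivAt hp1 x).continuousAt).continuousWithinAt
  · intro x hx
    rw [interior_Iic] at hx
    rw [(PHI_hasDerivAt hp1 x).deriv]
    exact PHI_deriv_neg hp1 hpN hx

include hp1 hpN in
lemma PHI_strictMonoOn : StrictMonoOn (PHI p NN μ) (Ici (((NN - p)/p) ^ (p-1))) := by
  apply strictMonoOn_of_deriv_pos (convex_Ici _)
  · exact fun x _ => ((PHI_hasDerivAt hp1 x).continuousAt).continuousWithinAt
  · intro x hx
    rw [interior_Ici] at hx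
    rw [(PHI_hasDerivAt hp1 x).deriv]
    exact PHI_deriv_pos hp1 hpN hx

end PHIlem

-- aux: |x|^(p-2) * x * x = |x|^p
lemma abs_rpow_sq {p : ℝ} (hp : 2 ≤ p ∨ True) (hp0 : p ≠ 0) (x : ℝ) :
    |x| ^ (p - 2) * x * x = |x| ^ p := by
  rcases eq_or_ne x 0 with h | h
  · simp [h, Real.zero_rpow hp0]
  · have hax : |x| ≠ 0 := abs_ne_zero.mpr h
    have : x * x = |x| * |x| := by
      rcases abs_cases x with ⟨h1, _⟩ | ⟨h1, _⟩ <;> rw [h1] <;> ring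
    rw [mul_assoc, this, ← mul_assoc, ← Real.rpow_add_one hax, ← Real.rpow_add_one hax]
    congr 1; ring

lemma abs_E {p : ℝ} (hp1 : p ≠ 1) (x : ℝ) : |(|x| ^ (p - 2) * x)| = |x| ^ (p - 1) := by
  rcases eq_or_ne x 0 with h | h
  · simp [h, Real.zero_rpow (show p - 1 ≠ 0 by intro hc; exact hp1 (by linarith))]
  · have hax : |x| ≠ 0 := abs_ne_zero.mpr h
    rw [abs_mul, abs_of_nonneg (Real.rpow_nonneg (abs_nonneg x) _), ← Real.rpow_add_one hax]
    congr 1; ring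

lemma w_hasDerivAt
    (pn p μ m : ℝ) (hp1 : 1 < p) (hppn : p < pn)
    (f u u' w : ℝ → ℝ)
    (hu_pos : ∀ r : ℝ, 0 < r → 0 < u r)
    (hu' : ∀ r : ℝ, 0 < r → HasDerivAt u (u' r) r)
    (hS : ∀ r : ℝ, 0 < r →
      HasDerivAt (fun s : ℝ => s ^ (pn - 1) * |u' s| ^ (p - 2) * u' s)
        (-(r ^ (pn - 1) *
          (μ / r ^ p * u r ^ (p - 1) - m * u r ^ (p - 1) + f (u r)))) r)
    (hw : ∀ r : ℝ, 0 < r →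
      w r = -(r ^ (p - 1) * |u' r| ^ (p - 2) * u' r) / u r ^ (p - 1))
    (r : ℝ) (hr : 0 < r) :
    HasDerivAt w
      ((PHI p pn μ (w r) - r ^ p * (m - f (u r) / u r ^ (p - 1))) / r) r := by
  have hp0 : (0:ℝ) < p := by linarith
  have hup : 0 < u r := hu_pos r hr
  have hb : 0 < u r ^ (p - 1) := Real.rpow_pos_of_pos hup _
  have hrp : (0:ℝ) < r ^ p := Real.rpow_pos_of_pos hr _
  set g : ℝ → ℝ := fun s : ℝ => s ^ (pn - 1) * |u' s| ^ (p - 2) * u' s with hg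
  have hgd := hS r hr
  -- numerator
  have hnum : HasDerivAt (fun s : ℝ => s ^ (p - pn) * g s)
      ((p - pn) * r ^ (p - pn - 1) * g r + r ^ (p - pn) *
        (-(r ^ (pn - 1) *
          (μ / r ^ p * u r ^ (p - 1) - m * u r ^ (p - 1) + f (u r))))) r :=
    (Real.hasDerivAt_rpow_const (Or.inl hr.ne')).mul hgd
  have hden : HasDerivAt (fun s : ℝ => u s ^ (p - 1))
      (u' r * (p - 1) * u r ^ (p - 1 - 1)) r :=
    (hu' r hr).rpow_const (Or.inl hup.ne')
  have hq := (hnum.div hden hb.ne').neg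
  -- w agrees with this formula near r
  have hevent : w =ᶠ[𝓝 r] fun s : ℝ => -(s ^ (p - pn) * g s / u s ^ (p - 1)) := by
    filter_upwards [Ioi_mem_nhds hr] with s hs
    have hs0 : (0:ℝ) < s := hs
    have hyx : s ^ (p - pn) * s ^ (pn - 1) = s ^ (p - 1) := by
      rw [← Real.rpow_add hs0]; congr 1; ring
    rw [hw s hs0, hg]
    rw [show s ^ (p - pn) * (s ^ (pn - 1) * |u' s| ^ (p - 2) * u' s)
        = (s ^ (p - pn) * s ^ (pn - 1)) * |u' s| ^ (p - 2) * u' s by ring, hyx]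
    rw [neg_div]
  have hD := hq.congr_of_eventuallyEq hevent
  refine hD.congr_deriv ?_
  -- now the algebraic identity
  set E : ℝ := |u' r| ^ (p - 2) * u' r with hE
  have hgr : g r = r ^ (pn - 1) * E := by rw [hg, hE]; ring
  set X : ℝ := r ^ (pn - 1) with hX
  set Y : ℝ := r ^ (p - pn) with hY
  set b : ℝ := u r ^ (p - 1) with hbdef
  set c : ℝ := u r ^ (p - 1 - 1) with hcdef
  set P : ℝ := |u' r| ^ p with hP
  have hwr : w r = -(Y * X * E) / b := by
    rw [hw r hr]
    have hyx : Y * X = r ^ (p - 1) := by rw [hY, hX, ← Real.rpow_add hr]; congr 1; ring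
    rw [hE, ← hyx]; ring
  have hI3 : E * u' r = P := by
    rw [hE, hP, mul_assoc, mul_comm (u' r) (u' r), ← mul_assoc]
    exact abs_rpow_sq (Or.inr trivial) hp0.ne' (u' r)
  have e_p : Y * X * r = r ^ p := by
    rw [hY, hX, ← Real.rpow_add hr, ← Real.rpow_add_one hr.ne']
    congr 1; ring
  have e_Y : r ^ (p - pn - 1) = Y / r := by
    rw [hY, eq_div_iff hr.ne', ← Real.rpow_add_one hr.ne']
    congr 1; ring
  have e_u : c = b * b / u r ^ p := by
    rw [hcdef, hbdef, eq_div_iff (Real.rpow_pos_of_pos hup p).ne',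
      ← Real.rpow_add hup, ← Real.rpow_add hup]
    congr 1; ring
  have hW4 : |w r| ^ (p / (p - 1)) = r ^ p * P / u r ^ p := by
    have habs : |w r| = (r * |u' r| / u r) ^ (p - 1) := by
      rw [hwr, abs_div, abs_neg, abs_of_pos hb]
      rw [show |Y * X * E| = (Y * X) * |E| by
        rw [abs_mul, abs_of_pos (by positivity : (0:ℝ) < Y * X)]]
      rw [abs_E hp1.ne' (u' r)]
      have hyx : Y * X = r ^ (p - 1) := by rw [hY, hX, ← Real.rpow_add hr]; congr 1; ring
      rw [hyx, hbdef, Real.div_rpow (by positivity) hup.le,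
        Real.mul_rpow hr.le (abs_nonneg _)]
    rw [habs, ← Real.rpow_mul (by positivity : (0:ℝ) ≤ r * |u' r| / u r),
      mul_comm (p-1), div_mul_cancel₀ _ (by linarith : p - 1 ≠ 0),
      Real.div_rpow (by positivity) hup.le, Real.mul_rpow hr.le (abs_nonneg _), hP]
  have hup_ne : (u r ^ p) ≠ 0 := (Real.rpow_pos_of_pos hup p).ne'
  have hY0 : Y ≠ 0 := (Real.rpow_pos_of_pos hr _).ne'
  have hX0 : X ≠ 0 := (Real.rpow_pos_of_pos hr _).ne'
  rw [PHI, hW4, hwr, hgr, e_Y, e_u, ← hI3, ← e_p]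
  field_simp
  ring

lemma w_abs {p : ℝ} (hp1 : 1 < p) (u u' w : ℝ → ℝ) (r : ℝ) (hr : 0 < r) (hu : 0 < u r)
    (hw : w r = -(r ^ (p - 1) * |u' r| ^ (p - 2) * u' r) / u r ^ (p - 1)) :
    |w r| = (r * |u' r| / u r) ^ (p - 1) := by
  rw [hw, abs_div, abs_neg, abs_of_pos (Real.rpow_pos_of_pos hu _), mul_assoc, abs_mul,
    abs_of_pos (Real.rpow_pos_of_pos hr _), abs_E hp1.ne' (u' r),
    Real.div_rpow (by positivity) hu.le, Real.mul_rpow hr.le (abs_nonneg _)]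


lemma L_tendsto (pn p m A q t₀ : ℝ) (hp1 : 1 < p) (hppn : p < pn)
    (hA : 0 < A) (hq : p < q) (ht₀ : 0 < t₀)
    (f u : ℝ → ℝ)
    (hu_pos : ∀ r : ℝ, 0 < r → 0 < u r)
    (hW2 : Tendsto (fun r : ℝ => u r * r ^ ((pn - p) / p)) (𝓝[>] 0) (𝓝 0))
    (hF1 : ∀ t : ℝ, |t| ≤ t₀ → |f t| ≤ A * |t| ^ (q - 1))
    (hF2 : ∀ t : ℝ, t₀ ≤ |t| → |f t| ≤ A * |t| ^ (pn * p / (pn - p) - 1)) :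
    Tendsto (fun r : ℝ => r ^ p * (m - f (u r) / u r ^ (p - 1))) (𝓝[>] 0) (𝓝 0) := by
  have hp0 : (0:ℝ) < p := by linarith
  have hNp : (0:ℝ) < pn - p := by linarith
  have hrp0 : Tendsto (fun r : ℝ => r ^ p) (𝓝[>] 0) (𝓝 0) := by
    have hc : ContinuousAt (fun r : ℝ => r ^ p) 0 :=
      Real.continuousAt_rpow_const _ _ (Or.inr hp0.le)
    have := hc.tendsto.mono_left (nhdsWithin_le_nhds (s := Ioi (0:ℝ)))
    simpa [Real.zero_rpow hp0.ne'] using this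
  have key : Tendsto (fun r : ℝ => r ^ p * (f (u r) / u r ^ (p - 1))) (𝓝[>] 0) (𝓝 0) := by
    set pp : ℝ := pn * p / (pn - p) - p with hpp
    have hpp0 : 0 < pp := by
      rw [hpp, sub_pos, lt_div_iff₀ hNp]
      have : p * (pn - p) < pn * p := by nlinarith
      linarith [this]
    apply squeeze_zero_norm' (a := fun r : ℝ =>
      A * t₀ ^ (q - p) * r ^ p + A * (u r * r ^ ((pn - p)/p)) ^ pp)
    · filter_upwards [self_mem_nhdsWithin] with r (hr : 0 < r)
      have hs : 0 < u r := hu_pos r hr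
      have hb : 0 < u r ^ (p - 1) := Real.rpow_pos_of_pos hs _
      have hrpos : 0 < r ^ p := Real.rpow_pos_of_pos hr _
      rw [Real.norm_eq_abs, abs_mul, abs_div, abs_of_pos hrpos, abs_of_pos hb]
      rcases le_or_gt (u r) t₀ with hcase | hcase
      · have h1 : |f (u r)| ≤ A * u r ^ (q - 1) := by
          have := hF1 (u r) (by rw [abs_of_pos hs]; exact hcase)
          rwa [abs_of_pos hs] at this
        have h2 : r ^ p * (|f (u r)| / u r ^ (p - 1)) ≤ A * t₀ ^ (q - p) * r ^ p := by
          have hdiv : u r ^ (q - 1) / u r ^ (p - 1) = u r ^ (q - p) := by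
            rw [← Real.rpow_sub hs]; congr 1; ring
          have h3 : |f (u r)| / u r ^ (p - 1) ≤ A * u r ^ (q - p) := by
            rw [← hdiv, ← mul_div_assoc]
            gcongr
          have h4 : u r ^ (q - p) ≤ t₀ ^ (q - p) :=
            Real.rpow_le_rpow hs.le hcase (by linarith)
          calc r ^ p * (|f (u r)| / u r ^ (p - 1)) ≤ r ^ p * (A * t₀ ^ (q - p)) := by
                apply mul_le_mul_of_nonneg_left _ hrpos.le
                exact h3.trans (by nlinarith [Real.rpow_nonneg hs.le (q-p)])
            _ = A * t₀ ^ (q - p) * r ^ p := by ring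
        have hnn : 0 ≤ A * (u r * r ^ ((pn - p)/p)) ^ pp := by positivity
        linarith
      · have h1 : |f (u r)| ≤ A * u r ^ (pn * p / (pn - p) - 1) := by
          have := hF2 (u r) (by rw [abs_of_pos hs]; exact hcase.le)
          rwa [abs_of_pos hs] at this
        have hdiv : u r ^ (pn * p / (pn - p) - 1) / u r ^ (p - 1) = u r ^ pp := by
          rw [← Real.rpow_sub hs]; congr 1; rw [hpp]; ring
        have h2 : r ^ p * (|f (u r)| / u r ^ (p - 1)) ≤ A * (u r ^ pp * r ^ p) := by
          have h3 : |f (u r)| / u r ^ (p - 1) ≤ A * u r ^ pp := by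
            rw [← hdiv]
            calc |f (u r)| / u r ^ (p - 1) ≤ A * u r ^ (pn * p / (pn - p) - 1) / u r ^ (p-1) := by
                  gcongr
              _ = A * (u r ^ (pn * p / (pn - p) - 1) / u r ^ (p-1)) := by ring
          calc r ^ p * (|f (u r)| / u r ^ (p - 1)) ≤ r ^ p * (A * u r ^ pp) :=
                mul_le_mul_of_nonneg_left h3 hrpos.le
            _ = A * (u r ^ pp * r ^ p) := by ring
        have hid : (u r * r ^ ((pn - p)/p)) ^ pp = u r ^ pp * r ^ p := by
          rw [Real.mul_rpow hs.le (Real.rpow_nonneg hr.le _), ← Real.rpow_mul hr.le]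
          congr 2
          rw [hpp]; field_simp; ring
        have hnn : 0 ≤ A * t₀ ^ (q - p) * r ^ p := by positivity
        rw [hid] at *
        linarith
    · have t1 : Tendsto (fun r : ℝ => A * t₀ ^ (q - p) * r ^ p) (𝓝[>] 0) (𝓝 0) := by
        simpa using hrp0.const_mul (A * t₀ ^ (q - p))
      have t2 : Tendsto (fun r : ℝ => A * (u r * r ^ ((pn - p)/p)) ^ pp) (𝓝[>] 0) (𝓝 0) := by
        have hc : ContinuousAt (fun x : ℝ => x ^ pp) 0 :=
          Real.continuousAt_rpow_const _ _ (Or.inr hpp0.le)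
        have := (hc.tendsto.comp hW2).const_mul A
        simpa [Function.comp, Real.zero_rpow hpp0.ne'] using this
      simpa using t1.add t2
  have : Tendsto (fun r : ℝ => r ^ p * m - r ^ p * (f (u r) / u r ^ (p - 1))) (𝓝[>] 0) (𝓝 0) := by
    simpa using (hrp0.mul_const m).sub key
  apply this.congr
  intro r; ring

/-- If `w b ≥ B` and at every point of `[a, b]` where `w = B` the derivative of `w`
is negative, then `w a ≥ B` (no downward crossing when moving left). -/
lemma no_down_crossing {w : ℝ → ℝ} {B a b : ℝ} (hr : a ≤ b)
    (hcont : ∀ r ∈ Icc a b, ContinuousAt w r)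
    (hcross : ∀ r ∈ Icc a b, w r = B → ∃ d < 0, HasDerivAt w d r)
    (htop : B ≤ w b) : B ≤ w a := by
  by_contra hlt
  push_neg at hlt
  set T : Set ℝ := Icc a b ∩ w ⁻¹' {B} with hT
  have hwc : ContinuousOn w (Icc a b) := fun r hrm => (hcont r hrm).continuousWithinAt
  have hTne : T.Nonempty := by
    obtain ⟨r, hrm, hrB⟩ := intermediate_value_Icc hr hwc ⟨hlt.le, htop⟩
    exact ⟨r, hrm, hrB⟩
  have hTbdd : BddBelow T := ⟨a, fun r hrm => hrm.1.1⟩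
  have hTclosed : IsClosed T :=
    ContinuousOn.preimage_isClosed_of_isClosed hwc isClosed_Icc isClosed_singleton
  set c := sInf T with hc
  have hcT : c ∈ T := hTclosed.csInf_mem hTne hTbdd
  have hcB : w c = B := hcT.2
  have hca : a ≤ c := hcT.1.1
  have hcb : c ≤ b := hcT.1.2
  have hac : a < c := by
    rcases hca.lt_or_eq with h | h
    · exact h
    · exact absurd (h ▸ hcB) (ne_of_lt hlt)
  -- On [a, c), w < B
  have hbelow : ∀ r ∈ Ico a c, w r < B := by
    intro r hrm
    rcases lt_trichotomy (w r) B with h | h | h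
    · exact h
    · exfalso
      have : r ∈ T := ⟨⟨hrm.1, hrm.2.le.trans hcb⟩, h⟩
      exact absurd (csInf_le hTbdd this) (not_le.mpr hrm.2)
    · exfalso
      have hsub : Icc a r ⊆ Icc a b := Icc_subset_Icc le_rfl (hrm.2.le.trans hcb)
      obtain ⟨t, htm, htB⟩ := intermediate_value_Icc hrm.1 (hwc.mono hsub) ⟨hlt.le, h.le⟩
      have : t ∈ T := ⟨⟨htm.1, htm.2.trans (hrm.2.le.trans hcb)⟩, htB⟩
      exact absurd (csInf_le hTbdd this) (not_le.mpr (lt_of_le_of_lt htm.2 hrm.2))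
  -- derivative at c is negative, so w > B just left of c: contradiction
  obtain ⟨d, hd, hder⟩ := hcross c ⟨hca, hcb⟩ hcB
  have hslope := hasDerivAt_iff_tendsto_slope.mp hder
  have hev : ∀ᶠ r in 𝓝[<] c, slope w c r < 0 :=
    (hslope.mono_left (nhdsWithin_mono c (fun x hx => ne_of_lt hx))).eventually (Iio_mem_nhds hd)
  have hev2 : ∀ᶠ r in 𝓝[<] c, r ∈ Ico a c := by
    filter_upwards [Ico_mem_nhdsLT hac] with r hrm using hrm
  obtain ⟨r, hs, hrm⟩ := (hev.and hev2).exists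
  have hwr : w r < B := hbelow r hrm
  have hsl : slope w c r = (w r - B) / (r - c) := by
    rw [slope_def_field, hcB]
  have hpos : (0:ℝ) < slope w c r := by
    rw [hsl]
    exact div_pos_of_neg_of_neg (by linarith) (by linarith [hrm.2])
  linarith

lemma no_up_crossing {w : ℝ → ℝ} {B a b : ℝ} (hr : a ≤ b)
    (hcont : ∀ r ∈ Icc a b, ContinuousAt w r)
    (hcross : ∀ r ∈ Icc a b, w r = B → ∃ d, 0 < d ∧ HasDerivAt w d r)
    (htop : w b ≤ B) : w a ≤ B := by
  have h := no_down_crossing (w := fun r => -w r) (B := -B) hr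
    (fun r hrm => (hcont r hrm).neg) ?_ (by simpa using htop)
  · simpa using h
  · intro r hrm hB
    obtain ⟨d, hd, hder⟩ := hcross r hrm (by linarith [neg_eq_iff_eq_neg.mp hB] )
    exact ⟨-d, by linarith, hder.neg⟩

lemma decr_of_deriv_nonpos {F : ℝ → ℝ} {a b : ℝ} (hab : a ≤ b)
    (hd : ∀ t ∈ Icc a b, ∃ d ≤ 0, HasDerivAt F d t) : F b ≤ F a := by
  have hcont : ContinuousOn F (Icc a b) := by
    intro t ht
    obtain ⟨d, _, h⟩ := hd t ht
    exact h.continuousAt.continuousWithinAt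
  have hdiff : DifferentiableOn ℝ F (interior (Icc a b)) := by
    intro t ht
    obtain ⟨d, _, h⟩ := hd t (interior_subset ht)
    exact h.differentiableAt.differentiableWithinAt
  have hn : ∀ x ∈ interior (Icc a b), deriv F x ≤ 0 := by
    intro x hx
    obtain ⟨d, hd0, h⟩ := hd x (interior_subset hx)
    rw [h.deriv]; exact hd0
  exact antitoneOn_of_deriv_nonpos (convex_Icc a b) hcont hdiff hn
    (left_mem_Icc.mpr hab) (right_mem_Icc.mpr hab) hab

lemma incr_of_deriv_nonneg {F : ℝ → ℝ} {a b : ℝ} (hab : a ≤ b)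
    (hd : ∀ t ∈ Icc a b, ∃ d, 0 ≤ d ∧ HasDerivAt F d t) : F a ≤ F b := by
  have h := decr_of_deriv_nonpos (F := fun t => -F t) hab ?_
  · simp only [neg_le_neg_iff] at h
    linarith [h]
  · intro t ht
    obtain ⟨d, hd0, hder⟩ := hd t ht
    exact ⟨-d, by linarith, hder.neg⟩

set_option maxHeartbeats 1000000 in
theorem stmt_4
    (N : ℕ) (hN : 2 ≤ N) (p μ m : ℝ)
    (hp1 : 1 < p) (hpN : p < N)
    (hμ0 : 0 ≤ μ) (hμ : μ < (((N : ℝ) - p) / p) ^ p)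
    (hm : 0 < m)
    (f : ℝ → ℝ) (hf : Continuous f)
    (hF : ∃ A > (0:ℝ), ∃ q > p, ∃ t₀ > (0:ℝ),
      (∀ t : ℝ, |t| ≤ t₀ → |f t| ≤ A * |t| ^ (q - 1)) ∧
      (∀ t : ℝ, t₀ ≤ |t| → |f t| ≤ A * |t| ^ ((N : ℝ) * p / ((N : ℝ) - p) - 1)))
    (u u' : ℝ → ℝ)
    (hu_pos : ∀ r : ℝ, 0 < r → 0 < u r)
    (hu' : ∀ r : ℝ, 0 < r → HasDerivAt u (u' r) r)
    (hS : ∀ r : ℝ, 0 < r →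
      HasDerivAt (fun s : ℝ => s ^ ((N : ℝ) - 1) * |u' s| ^ (p - 2) * u' s)
        (-(r ^ ((N : ℝ) - 1) *
          (μ / r ^ p * u r ^ (p - 1) - m * u r ^ (p - 1) + f (u r)))) r)
    (hW1 : IntegrableOn
      (fun r : ℝ => (u r ^ p + |u' r| ^ p) * r ^ ((N : ℝ) - 1)) (Ioo 0 1))
    (hW2 : Tendsto (fun r : ℝ => u r * r ^ (((N : ℝ) - p) / p)) (𝓝[>] 0) (𝓝 0))
    (γ₁ : ℝ)
    (hγ₁ : 0 ≤ γ₁ ∧ γ₁ < ((N : ℝ) - p) / p ∧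
      γ₁ ^ (p - 1) * ((p - 1) * γ₁ - ((N : ℝ) - p)) + μ = 0)
    (w : ℝ → ℝ)
    (hw : ∀ r : ℝ, 0 < r →
      w r = -(r ^ (p - 1) * |u' r| ^ (p - 2) * u' r) / u r ^ (p - 1)) :
    Tendsto w (𝓝[>] 0) (𝓝 (γ₁ ^ (p - 1))) := by
  obtain ⟨A, hA, q, hq, t₀, ht₀, hF1, hF2⟩ := hF
  obtain ⟨hγ₁0, hγ₁lt, hγ₁eq⟩ := hγ₁
  set pn : ℝ := (N:ℝ) with hpndef
  have hpn : p < pn := hpN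
  have hp0 : (0:ℝ) < p := by linarith
  have hp1' : (0:ℝ) < p - 1 := by linarith
  have hNp : (0:ℝ) < pn - p := by linarith
  set β : ℝ := (pn - p)/p with hβdef
  have hβ0 : 0 < β := by positivity
  set w₁ : ℝ := γ₁ ^ (p - 1) with hw₁def
  set ws : ℝ := ((pn - p)/p) ^ (p - 1) with hwsdef
  have hws0 : 0 < ws := Real.rpow_pos_of_pos (by positivity) _
  have hw₁0 : 0 ≤ w₁ := Real.rpow_nonneg hγ₁0 _
  have hw₁ws : w₁ < ws := Real.rpow_lt_rpow hγ₁0 hγ₁lt hp1'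
  -- PHI w₁ = 0
  have hPHIw₁ : PHI p pn μ w₁ = 0 := by
    rw [PHI, abs_of_nonneg hw₁0, hw₁def]
    have hcol : (γ₁ ^ (p-1)) ^ (p/(p-1)) = γ₁ ^ p := by
      rw [← Real.rpow_mul hγ₁0]; congr 1; field_simp
    rw [hcol]
    have hstep : γ₁ ^ p = γ₁ ^ (p-1) * γ₁ := by
      rcases eq_or_lt_of_le hγ₁0 with h | h
      · rw [← h, Real.zero_rpow hp0.ne', Real.zero_rpow (by linarith : p - 1 ≠ 0)]; ring
      · rw [← Real.rpow_add_one (ne_of_gt h)]; congr 1; ring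
    rw [hstep]
    linear_combination hγ₁eq
  -- PHI ws < 0
  have hPHIws : PHI p pn μ ws < 0 := by
    have hbase : (0:ℝ) < (pn - p)/p := by positivity
    rw [PHI, abs_of_nonneg hws0.le, hwsdef]
    have hcol : (((pn-p)/p) ^ (p-1)) ^ (p/(p-1)) = ((pn-p)/p) ^ p := by
      rw [← Real.rpow_mul hbase.le]; congr 1; field_simp
    rw [hcol]
    have hstep : ((pn-p)/p) ^ p = ((pn-p)/p) ^ (p-1) * ((pn-p)/p) := by
      rw [← Real.rpow_add_one hbase.ne']; congr 1; ring
    have hμ' : μ < ((pn - p)/p) ^ p := hμ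
    rw [hstep] at hμ' ⊢
    have hfact : (pn - p) * ((pn-p)/p) ^ (p-1) = p * (((pn-p)/p) ^ (p-1) * ((pn-p)/p)) := by
      field_simp
    nlinarith [Real.rpow_pos_of_pos hbase (p-1)]
  -- an explicit point where PHI is positive
  set T : ℝ := max (ws + 1) (((pn - p + 1)/(p-1)) ^ (p-1)) with hTdef
  have hTws : ws < T := lt_of_lt_of_le (by linarith) (le_max_left _ _)
  have hT0 : 0 < T := hws0.trans hTws
  have hPHIT : 0 < PHI p pn μ T := by
    have hT1 : ((pn - p + 1)/(p-1)) ≤ T ^ (1/(p-1)) := by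
      have h1 : (((pn-p+1)/(p-1)) ^ (p-1)) ^ (1/(p-1)) ≤ T ^ (1/(p-1)) :=
        Real.rpow_le_rpow (Real.rpow_nonneg (by positivity) _) (le_max_right _ _)
          (by positivity)
      rwa [← Real.rpow_mul (by positivity), mul_one_div, div_self hp1'.ne',
        Real.rpow_one] at h1
    have hsplit : T ^ (p/(p-1)) = T * T ^ (1/(p-1)) := by
      rw [show p/(p-1) = 1 + 1/(p-1) by field_simp; ring, Real.rpow_add hT0, Real.rpow_one]
    rw [PHI, abs_of_nonneg hT0.le, hsplit]
    have hkey : (pn - p + 1) * T ≤ (p-1) * (T * T^(1/(p-1))) := by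
      calc (pn - p + 1) * T = ((pn-p+1)/(p-1)) * T * (p-1) := by field_simp
        _ ≤ T^(1/(p-1)) * T * (p-1) := by
            apply mul_le_mul_of_nonneg_right _ hp1'.le
            exact mul_le_mul_of_nonneg_right hT1 hT0.le
        _ = (p-1) * (T * T^(1/(p-1))) := by ring
    nlinarith [hT0]
  -- the second zero w₂ of PHI
  have hPHIcont : ContinuousOn (PHI p pn μ) (Icc ws T) :=
    fun x _ => ((PHI_hasDerivAt hp1 x).continuousAt).continuousWithinAt
  obtain ⟨w₂, hw₂mem, hw₂0⟩ := intermediate_value_Icc hTws.le hPHIcont ⟨hPHIws.le, hPHIT.le⟩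
  have hwsw₂ : ws < w₂ := by
    rcases hw₂mem.1.lt_or_eq with h | h
    · exact h
    · exact absurd (h ▸ hw₂0) (ne_of_lt hPHIws)
  set B : ℝ := (ws + w₂)/2 with hBdef
  have hBws : ws < B := by rw [hBdef]; linarith
  have hBw₂ : B < w₂ := by rw [hBdef]; linarith
  have hB0 : 0 < B := hws0.trans hBws
  have hPHIB : PHI p pn μ B < 0 := by
    have := (PHI_strictMonoOn (μ := μ) hp1 hpn) (mem_Ici.mpr hBws.le)
      (mem_Ici.mpr (hBws.trans hBw₂).le) hBw₂
    rw [hw₂0] at this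
    exact this
  set γB : ℝ := B ^ (1/(p-1)) with hγBdef
  have hγBβ : β < γB := by
    have h1 : ws ^ (1/(p-1)) < B ^ (1/(p-1)) :=
      Real.rpow_lt_rpow hws0.le hBws (by positivity)
    rwa [hwsdef, ← Real.rpow_mul (by positivity), mul_one_div, div_self hp1'.ne',
      Real.rpow_one] at h1
  -- the perturbation L and the ODE for w
  set L : ℝ → ℝ := fun r => r ^ p * (m - f (u r) / u r ^ (p-1)) with hLdef
  have hLten : Tendsto L (𝓝[>](0:ℝ)) (𝓝 0) :=
    L_tendsto pn p m A q t₀ hp1 hpn hA hq ht₀ f u hu_pos hW2 hF1 hF2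
  have hwd : ∀ r : ℝ, 0 < r → HasDerivAt w ((PHI p pn μ (w r) - L r)/r) r :=
    fun r hr => w_hasDerivAt pn p μ m hp1 hpn f u u' w hu_pos hu' hS hw r hr
  have hwc : ∀ r : ℝ, 0 < r → ContinuousAt w r := fun r hr => (hwd r hr).continuousAt
  -- CLAIM U : eventually w r < w₁ + ε
  have claimU : ∀ ε : ℝ, 0 < ε → ∀ᶠ r in 𝓝[>](0:ℝ), w r < w₁ + ε := by
    intro ε hε
    set c : ℝ := min (w₁ + ε) ((w₁ + ws)/2) with hcdef
    have hcw₁ : w₁ < c := lt_min (by linarith) (by linarith)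
    have hcws : c < ws := lt_of_le_of_lt (min_le_right _ _) (by linarith)
    have hcB : c < B := hcws.trans hBws
    have hPHIc : PHI p pn μ c < 0 := by
      have := PHI_strictAntiOn (μ := μ) hp1 hpn (mem_Iic.mpr hw₁ws.le)
        (mem_Iic.mpr hcws.le) hcw₁
      rwa [hPHIw₁] at this
    set η : ℝ := min (-PHI p pn μ c) (-PHI p pn μ B) with hηdef
    have hη0 : 0 < η := lt_min (by linarith) (by linarith)
    have hΦle : ∀ x, c ≤ x → x ≤ B → PHI p pn μ x ≤ -η := by
      intro x h1 h2
      rcases le_total x ws with h | h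
      · have hmono := (PHI_strictAntiOn (μ := μ) hp1 hpn).antitoneOn
          (mem_Iic.mpr hcws.le) (mem_Iic.mpr h) h1
        have h4 : η ≤ -PHI p pn μ c := min_le_left _ _
        linarith
      · have hmono := (PHI_strictMonoOn (μ := μ) hp1 hpn).monotoneOn
          (mem_Ici.mpr h) (mem_Ici.mpr hBws.le) h2
        have h4 : η ≤ -PHI p pn μ B := min_le_right _ _
        linarith
    obtain ⟨δ, hδ0, hδ⟩ := Metric.tendsto_nhdsWithin_nhds.mp hLten (η/2) (by linarith)
    have hLsmall : ∀ r : ℝ, 0 < r → r < δ → |L r| < η/2 := by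
      intro r h1 h2
      have := hδ (mem_Ioi.mpr h1) (by rw [Real.dist_eq, sub_zero, abs_of_pos h1]; exact h2)
      rwa [Real.dist_eq, sub_zero] at this
    have hmain : ∀ rh : ℝ, 0 < rh → rh < δ → w rh < c := by
      intro rh h1 h2
      by_contra hcon
      push_neg at hcon
      -- Step 1: w rises above B somewhere below rh
      have hstep1 : ∃ r', 0 < r' ∧ r' ≤ rh ∧ B ≤ w r' := by
        by_cases hex : ∃ r', 0 < r' ∧ r' ≤ rh ∧ B ≤ w r'
        · exact hex
        push_neg at hex
        exfalso
        -- barrier at c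
        have hbar : ∀ r, 0 < r → r ≤ rh → c ≤ w r := by
          intro r hr hrr
          refine no_down_crossing hrr (fun t ht => hwc t (lt_of_lt_of_le hr ht.1)) ?_ hcon
          intro t ht htc
          have ht0 : 0 < t := lt_of_lt_of_le hr ht.1
          refine ⟨(PHI p pn μ (w t) - L t)/t, ?_, hwd t ht0⟩
          apply div_neg_of_neg_of_pos _ ht0
          have hL := hLsmall t ht0 (lt_of_le_of_lt ht.2 h2)
          have h5 := (abs_lt.mp hL).1
          rw [htc]
          have h6 := hΦle c le_rfl hcB.le
          linarith
        -- monotone increase (moving left) while trapped in [c, B)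
        set r₀ : ℝ := rh * Real.exp (-((2/η) * (B - c + 1))) with hr₀def
        have hr₀pos : 0 < r₀ := mul_pos h1 (Real.exp_pos _)
        have hr₀le : r₀ ≤ rh := by
          have hexp : Real.exp (-((2/η) * (B - c + 1))) ≤ 1 := by
            rw [Real.exp_le_one_iff]
            have h7 : 0 < (2/η) * (B - c + 1) :=
              mul_pos (by positivity) (by linarith)
            linarith
          calc r₀ = rh * Real.exp (-((2/η) * (B - c + 1))) := rfl
            _ ≤ rh * 1 := mul_le_mul_of_nonneg_left hexp h1.le
            _ = rh := mul_one rh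
        have hDh : ∀ t ∈ Icc r₀ rh, ∃ d ≤ (0:ℝ),
            HasDerivAt (fun s => w s + (η/2) * Real.log s) d t := by
          intro t ht
          have ht0 : 0 < t := lt_of_lt_of_le hr₀pos ht.1
          refine ⟨_, ?_, (hwd t ht0).add ((Real.hasDerivAt_log ht0.ne').const_mul (η/2))⟩
          have hcle : c ≤ w t := hbar t ht0 ht.2
          have hblt : w t < B := hex t ht0 ht.2
          have hΦ : PHI p pn μ (w t) ≤ -η := hΦle _ hcle hblt.le
          have hL := hLsmall t ht0 (lt_of_le_of_lt ht.2 h2)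
          have h5 := (abs_lt.mp hL).1
          have h6 : (PHI p pn μ (w t) - L t)/t ≤ (-(η/2))/t :=
            (div_le_div_iff_of_pos_right ht0).mpr (by linarith)
          have h8 : (-(η/2))/t + (η/2) * t⁻¹ = 0 := by
            field_simp
            ring
          linarith [h6]
        have hdecr := decr_of_deriv_nonpos hr₀le hDh
        have hx : (η/2) * Real.log rh - (η/2) * Real.log r₀ = B - c + 1 := by
          rw [hr₀def, Real.log_mul h1.ne' (Real.exp_pos _).ne', Real.log_exp]
          field_simp
          ring
        have hr₀val : w r₀ < B := hex r₀ hr₀pos hr₀le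
        linarith [hdecr, hcon]
      obtain ⟨r', hr'0, hr'le, hr'B⟩ := hstep1
      -- Step 2: barrier at B below r'
      have hbarB : ∀ r, 0 < r → r ≤ r' → B ≤ w r := by
        intro r hr hrr
        refine no_down_crossing hrr (fun t ht => hwc t (lt_of_lt_of_le hr ht.1)) ?_ hr'B
        intro t ht htc
        have ht0 : 0 < t := lt_of_lt_of_le hr ht.1
        refine ⟨_, ?_, hwd t ht0⟩
        apply div_neg_of_neg_of_pos _ ht0
        have hL := hLsmall t ht0 (lt_of_le_of_lt (ht.2.trans hr'le) h2)
        have h5 := (abs_lt.mp hL).1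
        rw [htc]
        have h6 := hΦle B hcB.le le_rfl
        linarith
-- Step 3: logarithmic derivative bound for u
      have hu'neg : ∀ t, 0 < t → t ≤ r' → u' t / u t ≤ (-γB) / t := by
        intro t ht htle
        have hwB := hbarB t ht htle
        have hut : 0 < u t := hu_pos t ht
        have hwpos : 0 < w t := hB0.trans_le hwB
        have habs : |w t| = (t * |u' t| / u t) ^ (p-1) :=
          w_abs hp1 u u' w t ht hut (hw t ht)
        have hvγ : γB ≤ t * |u' t| / u t := by
          have h1 : B ≤ (t * |u' t| / u t) ^ (p-1) := by
            rw [← habs, abs_of_pos hwpos]; exact hwB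
          have h2 : B ^ (1/(p-1)) ≤ ((t*|u' t|/u t) ^ (p-1)) ^ (1/(p-1)) :=
            Real.rpow_le_rpow hB0.le h1 (by positivity)
          rwa [← Real.rpow_mul (by positivity), mul_one_div, div_self hp1'.ne',
            Real.rpow_one] at h2
        have hu'0 : u' t < 0 := by
          by_contra hx
          push_neg at hx
          have hnum : 0 ≤ t ^ (p-1) * |u' t| ^ (p-2) * u' t := by positivity
          have : w t ≤ 0 := by
            rw [hw t ht]
            apply div_nonpos_of_nonpos_of_nonneg (by linarith) (Real.rpow_pos_of_pos hut _).le
          linarith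
        rw [abs_of_neg hu'0] at hvγ
        have h3 : γB * u t ≤ t * -u' t := (le_div_iff₀ hut).mp hvγ
        rw [div_le_div_iff₀ hut ht]
        linarith
      -- Step 4: decay estimate for log u
      have hφb : ∀ t, 0 < t → t ≤ r' →
          Real.log (u r') + γB * Real.log r' ≤ Real.log (u t) + γB * Real.log t := by
        intro t ht htle
        apply decr_of_deriv_nonpos htle
        intro s hs
        have hs0 : 0 < s := lt_of_lt_of_le ht hs.1
        refine ⟨_, ?_, ((hu' s hs0).log (hu_pos s hs0).ne').add
          ((Real.hasDerivAt_log hs0.ne').const_mul γB)⟩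
        have h4 := hu'neg s hs0 hs.2
        have h5 : (-γB)/s = -(γB * s⁻¹) := by field_simp
        rw [h5] at h4
        linarith
      -- Step 5: contradiction with (W)
      have hlower : ∀ t, 0 < t → t ≤ r' →
          Real.exp ((Real.log (u r') + γB * Real.log r') + (β - γB) * Real.log t)
            ≤ u t * t ^ β := by
        intro t ht htle
        have h1 := hφb t ht htle
        have h2 : u t * t ^ β = Real.exp (Real.log (u t) + β * Real.log t) := by
          rw [Real.exp_add, Real.exp_log (hu_pos t ht), ← Real.log_rpow ht,
            Real.exp_log (Real.rpow_pos_of_pos ht _)]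
        rw [h2]
        apply Real.exp_le_exp.mpr
        linarith
      have hψ : Tendsto (fun t : ℝ =>
          Real.exp ((Real.log (u r') + γB * Real.log r') + (β - γB) * Real.log t))
          (𝓝[>] (0:ℝ)) atTop := by
        apply Real.tendsto_exp_atTop.comp
        apply tendsto_atTop_add_const_left
        have hlog : Tendsto Real.log (𝓝[>] (0:ℝ)) atBot :=
          Real.tendsto_log_nhdsGT_zero
        have hcneg : β - γB < 0 := by linarith
        exact Tendsto.const_mul_atBot_of_neg hcneg hlog
      have h1 := hψ.eventually_ge_atTop 1
      have h2 : ∀ᶠ t in 𝓝[>] (0:ℝ), u t * t ^ β < 1 :=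
        hW2.eventually_lt_const one_pos
      have h3 : Ioc (0:ℝ) r' ∈ 𝓝[>] (0:ℝ) := Ioc_mem_nhdsGT hr'0
      obtain ⟨t, ht1, ht2, ht3⟩ := (h1.and (h2.and (eventually_mem_set.mpr h3))).exists
      have := hlower t ht3.1 ht3.2
      linarith [ht2]
    have hmem : Ioo (0:ℝ) δ ∈ 𝓝[>] (0:ℝ) := Ioo_mem_nhdsGT hδ0
    filter_upwards [hmem] with r hr
    have h9 := hmain r hr.1 hr.2
    have hcle : c ≤ w₁ + ε := min_le_left _ _
    linarith
  -- CLAIM L : eventually w₁ - ε < w r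
  have claimL : ∀ ε : ℝ, 0 < ε → ∀ᶠ r in 𝓝[>](0:ℝ), w₁ - ε < w r := by
    intro ε hε
    set c : ℝ := w₁ - ε with hcdef
    have hcw₁ : c < w₁ := by rw [hcdef]; linarith
    have hcws : c < ws := by linarith
    have hPHIc : 0 < PHI p pn μ c := by
      have := PHI_strictAntiOn (μ := μ) hp1 hpn (mem_Iic.mpr hcws.le)
        (mem_Iic.mpr hw₁ws.le) hcw₁
      rwa [hPHIw₁] at this
    set η : ℝ := PHI p pn μ c with hηdef
    set εL : ℝ := min η (p-1) / 2 with hεLdef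
    have hεL0 : 0 < εL := div_pos (lt_min hPHIc hp1') two_pos
    have hεLη : εL ≤ η/2 := by
      rw [hεLdef]; gcongr; exact min_le_left _ _
    have hεLp : εL ≤ (p-1)/2 := by
      rw [hεLdef]; gcongr; exact min_le_right _ _
    have hΦge : ∀ x, x ≤ c → η ≤ PHI p pn μ x := by
      intro x hx
      exact (PHI_strictAntiOn (μ := μ) hp1 hpn).antitoneOn
        (mem_Iic.mpr (hx.trans hcws.le)) (mem_Iic.mpr hcws.le) hx
    obtain ⟨δ, hδ0, hδ⟩ := Metric.tendsto_nhdsWithin_nhds.mp hLten εL hεL0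
    have hLsmall : ∀ r : ℝ, 0 < r → r < δ → |L r| < εL := by
      intro r h1 h2
      have := hδ (mem_Ioi.mpr h1) (by rw [Real.dist_eq, sub_zero, abs_of_pos h1]; exact h2)
      rwa [Real.dist_eq, sub_zero] at this
    have hmain : ∀ rh : ℝ, 0 < rh → rh < δ → c < w rh := by
      intro rh h1 h2
      by_contra hcon
      push_neg at hcon
      -- barrier above at c
      have hbar : ∀ r, 0 < r → r ≤ rh → w r ≤ c := by
        intro r hr hrr
        refine no_up_crossing hrr (fun t ht => hwc t (lt_of_lt_of_le hr ht.1)) ?_ hcon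
        intro t ht htc
        have ht0 : 0 < t := lt_of_lt_of_le hr ht.1
        refine ⟨_, ?_, hwd t ht0⟩
        apply div_pos _ ht0
        have hL := hLsmall t ht0 (lt_of_le_of_lt ht.2 h2)
        have h5 := (abs_lt.mp hL).2
        rw [htc]
        linarith
      -- ride down to ≤ -2
      set M : ℝ := max (w rh + 2) 1 with hMdef
      have hM1 : (1:ℝ) ≤ M := le_max_right _ _
      have hM2 : w rh + 2 ≤ M := le_max_left _ _
      set r₁ : ℝ := rh * Real.exp (-((2/η) * M)) with hr₁def
      have hr₁pos : 0 < r₁ := mul_pos h1 (Real.exp_pos _)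
      have hr₁le : r₁ ≤ rh := by
        have hexp : Real.exp (-((2/η) * M)) ≤ 1 := by
          rw [Real.exp_le_one_iff]
          have h7 : 0 < (2/η) * M := mul_pos (by positivity) (by linarith)
          linarith
        calc r₁ = rh * Real.exp (-((2/η) * M)) := rfl
          _ ≤ rh * 1 := mul_le_mul_of_nonneg_left hexp h1.le
          _ = rh := mul_one rh
      have hincr : w r₁ - (η/2) * Real.log r₁ ≤ w rh - (η/2) * Real.log rh := by
        apply incr_of_deriv_nonneg (F := fun s => w s - (η/2) * Real.log s) hr₁le
        intro t ht
        have ht0 : 0 < t := lt_of_lt_of_le hr₁pos ht.1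
        refine ⟨_, ?_, (hwd t ht0).sub ((Real.hasDerivAt_log ht0.ne').const_mul (η/2))⟩
        have hwt : w t ≤ c := hbar t ht0 ht.2
        have hΦ : η ≤ PHI p pn μ (w t) := hΦge _ hwt
        have hL := hLsmall t ht0 (lt_of_le_of_lt ht.2 h2)
        have h5 := (abs_lt.mp hL).2
        have h6 : (η/2)/t ≤ (PHI p pn μ (w t) - L t)/t :=
          (div_le_div_iff_of_pos_right ht0).mpr (by linarith)
        have h8 : (η/2)/t - (η/2) * t⁻¹ = 0 := by field_simp; ring
        linarith
      have hx : (η/2) * Real.log rh - (η/2) * Real.log r₁ = M := by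
        rw [hr₁def, Real.log_mul h1.ne' (Real.exp_pos _).ne', Real.log_exp]
        field_simp
        ring
      have hwr₁ : w r₁ ≤ -2 := by linarith
      -- barrier at -1
      have hbar1 : ∀ r, 0 < r → r ≤ r₁ → w r ≤ -1 := by
        intro r hr hrr
        refine no_up_crossing hrr (fun t ht => hwc t (lt_of_lt_of_le hr ht.1)) ?_
          (by linarith : w r₁ ≤ -1)
        intro t ht htc
        have ht0 : 0 < t := lt_of_lt_of_le hr ht.1
        refine ⟨_, ?_, hwd t ht0⟩
        apply div_pos _ ht0
        have hL := hLsmall t ht0 (lt_of_le_of_lt (ht.2.trans hr₁le) h2)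
        have h5 := (abs_lt.mp hL).2
        rw [htc]
        have hPHIneg1 : PHI p pn μ (-1 : ℝ) = (p-1) + (pn - p) + μ := by
          rw [PHI, abs_neg, abs_one, Real.one_rpow]
          ring
        rw [hPHIneg1]
        linarith
      -- the blow-up quantity
      set e : ℝ := -(1/(p-1)) with hedef
      have hH : ∀ t, 0 < t → t ≤ r₁ → ∃ d, 0 ≤ d ∧
          HasDerivAt (fun s => (-(w s)) ^ e - (1/2) * Real.log s) d t := by
        intro t ht0 htle
        have hwt1 : w t ≤ -1 := hbar1 t ht0 htle
        have hnw : (1:ℝ) ≤ -(w t) := by linarith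
        have hnw0 : (0:ℝ) < -(w t) := by linarith
        have hder1 : HasDerivAt (fun s => (-(w s)) ^ e)
            (-((PHI p pn μ (w t) - L t)/t) * e * (-(w t)) ^ (e - 1)) t :=
          ((hwd t ht0).neg).rpow_const (Or.inl hnw0.ne')
        refine ⟨_, ?_, hder1.sub ((Real.hasDerivAt_log ht0.ne').const_mul (1/2))⟩
        have hΦlb : (p-1) * (-(w t)) ^ (p/(p-1)) ≤ PHI p pn μ (w t) := by
          rw [PHI, abs_of_neg (by linarith : w t < 0)]
          have h9 : 0 ≤ (pn - p) * (-(w t)) := by positivity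
          linarith [h9, hμ0]
        have hrp1 : (1:ℝ) ≤ (-(w t)) ^ (p/(p-1)) := Real.one_le_rpow hnw (by positivity)
        have hL := hLsmall t ht0 (lt_of_le_of_lt (htle.trans hr₁le) h2)
        have h5 := (abs_lt.mp hL).2
        have h6 : (p-1)/2 * (-(w t)) ^ (p/(p-1)) ≤ PHI p pn μ (w t) - L t := by
          have h11 : (p-1)/2 * 1 ≤ (p-1)/2 * (-(w t)) ^ (p/(p-1)) :=
            mul_le_mul_of_nonneg_left hrp1 (by positivity)
          linarith [h11, hΦlb, h5, hεLp]
        have hcomb : (-(w t)) ^ (p/(p-1)) * (-(w t)) ^ (e - 1) = 1 := by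
          rw [← Real.rpow_add hnw0,
            show p/(p-1) + (e - 1) = 0 by rw [hedef]; field_simp; ring]
          exact Real.rpow_zero _
        have hpow_pos : 0 < (-(w t)) ^ (e - 1) := Real.rpow_pos_of_pos hnw0 _
        have hD : (p-1)/2 * (-(w t)) ^ (p/(p-1)) / t ≤ (PHI p pn μ (w t) - L t)/t :=
          (div_le_div_iff_of_pos_right ht0).mpr h6
        have hstep := mul_le_mul_of_nonneg_right hD
          (by positivity : (0:ℝ) ≤ (1/(p-1)) * (-(w t)) ^ (e-1))
        have hLHS : (p-1)/2 * (-(w t)) ^ (p/(p-1)) / t * ((1/(p-1)) * (-(w t)) ^ (e-1))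
            = 1/2 * t⁻¹ := by
          have h10 : (p-1)/2 * (-(w t)) ^ (p/(p-1)) / t * ((1/(p-1)) * (-(w t)) ^ (e-1))
              = ((-(w t)) ^ (p/(p-1)) * (-(w t)) ^ (e-1)) * ((p-1) * (1/(p-1))) / (2*t) := by
            field_simp
          rw [h10, hcomb, show (p-1) * (1/(p-1)) = (1:ℝ) by field_simp]
          ring
        have hfinal : 1/2 * t⁻¹ ≤ -((PHI p pn μ (w t) - L t)/t) * e * (-(w t)) ^ (e - 1) := by
          have hrw : -((PHI p pn μ (w t) - L t)/t) * e * (-(w t)) ^ (e-1)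
              = (PHI p pn μ (w t) - L t)/t * ((1/(p-1)) * (-(w t)) ^ (e-1)) := by
            rw [hedef]; ring
          rw [hrw, ← hLHS]
          exact hstep
        linarith [hfinal]
      -- final contradiction: the blow-up quantity becomes negative
      have hw1neg : (0:ℝ) < -(w r₁) := by linarith
      have hhpos : 0 < (-(w r₁)) ^ e := Real.rpow_pos_of_pos hw1neg _
      set r₂ : ℝ := r₁ * Real.exp (-(2 * ((-(w r₁)) ^ e + 1))) with hr₂def
      have hr₂pos : 0 < r₂ := mul_pos hr₁pos (Real.exp_pos _)
      have hr₂le : r₂ ≤ r₁ := by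
        have hexp : Real.exp (-(2 * ((-(w r₁)) ^ e + 1))) ≤ 1 := by
          rw [Real.exp_le_one_iff]
          linarith [hhpos]
        calc r₂ = r₁ * Real.exp (-(2 * ((-(w r₁)) ^ e + 1))) := rfl
          _ ≤ r₁ * 1 := mul_le_mul_of_nonneg_left hexp hr₁pos.le
          _ = r₁ := mul_one r₁
      have hmono : (-(w r₂)) ^ e - (1/2) * Real.log r₂ ≤ (-(w r₁)) ^ e - (1/2) * Real.log r₁ :=
        incr_of_deriv_nonneg (F := fun s => (-(w s)) ^ e - (1/2) * Real.log s) hr₂le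
          (fun t ht => hH t (lt_of_lt_of_le hr₂pos ht.1) ht.2)
      have hx2 : (1/2) * Real.log r₁ - (1/2) * Real.log r₂ = (-(w r₁)) ^ e + 1 := by
        rw [hr₂def, Real.log_mul hr₁pos.ne' (Real.exp_pos _).ne', Real.log_exp]
        ring
      have hr₂neg : (0:ℝ) < -(w r₂) := by linarith [hbar1 r₂ hr₂pos hr₂le]
      have hpos2 : 0 < (-(w r₂)) ^ e := Real.rpow_pos_of_pos hr₂neg _
      linarith [hmono, hx2, hpos2]
    have hmem : Ioo (0:ℝ) δ ∈ 𝓝[>] (0:ℝ) := Ioo_mem_nhdsGT hδ0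
    filter_upwards [hmem] with r hr
    exact hmain r hr.1 hr.2
  -- assemble the two claims
  rw [tendsto_order]
  constructor
  · intro l hl
    filter_upwards [claimL (w₁ - l) (by linarith)] with r h
    linarith
  · intro U hU
    filter_upwards [claimU (U - w₁) (by linarith)] with r h
    linarith
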